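/- There exists a constant α₁ > 0, depending only on N, p, q, C_p, C_q and S, with the following property: for all a, b > 0 with T_{a,b} < α₁, the function h_{a,b} admits exactly two critical points in (0,∞) — at the smaller critical point h_{a,b} has a local minimum with negative value, and at the larger critical point h_{a,b} attains its global maximum over (0,∞), with positive value. Furthermore, there exist unique numbers 0 < R₀ < R₁ such that h_{a,b}(R₀) = h_{a,b}(R₁) = 0, and h_{a,b}(t) > 0 if and only if t ∈ (R₀, R₁). -/

import Mathlib

open Real Set

/-- `γ_s = N(s-2)/2`. -/
noncomputable def gam (N : ℕ) (s : ℝ) : ℝ := (N : ℝ) * (s - 2) / 2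

/-- The critical Sobolev exponent `2* = 2N/(N-2)`. -/
noncomputable def twoStar (N : ℕ) : ℝ := 2 * (N : ℝ) / ((N : ℝ) - 2)

/-- The function `h_{a,b}`. -/
noncomputable def hab (N : ℕ) (p q Cp Cq S μ₁ μ₂ ν a b t : ℝ) : ℝ :=
  (1 / 2) * t ^ 2
    - (μ₁ / p * Cp * a ^ ((p - gam N p) / 2)) * t ^ (gam N p)
    - (μ₂ / q * Cq * b ^ ((q - gam N q) / 2)) * t ^ (gam N q)
    - ν * S ^ (-(twoStar N / 2)) * t ^ (twoStar N)

/-- The quantity `T_{a,b}`. -/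
noncomputable def Tab (N : ℕ) (p q μ₁ μ₂ ν a b : ℝ) : ℝ :=
  μ₂ * b ^ ((q - gam N q) / 2) *
      (μ₁ * a ^ ((p - gam N p) / 2)) ^ ((gam N q - 2) / (2 - gam N p))
    + ν * (μ₁ * a ^ ((p - gam N p) / 2)) ^ ((twoStar N - 2) / (2 - gam N p))

/-- helper: if `0 < t < c ^ (1/e)` then `t ^ e < c`. -/
lemma rpow_lt_of_lt_rpow_inv {c e t : ℝ} (hc : 0 < c) (he : 0 < e) (ht : 0 ≤ t)
    (h : t < c ^ (1 / e)) : t ^ e < c := by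
  have := Real.rpow_lt_rpow ht h he
  rwa [← Real.rpow_mul hc.le, one_div_mul_cancel he.ne', Real.rpow_one] at this

/-- helper: if `c ^ (1/e) < t` then `c < t ^ e`. -/
lemma lt_rpow_of_rpow_inv_lt {c e t : ℝ} (hc : 0 < c) (he : 0 < e)
    (h : c ^ (1 / e) < t) : c < t ^ e := by
  have hc' : (0:ℝ) ≤ c ^ (1/e) := Real.rpow_nonneg hc.le _
  have := Real.rpow_lt_rpow hc' h he
  rwa [← Real.rpow_mul hc.le, one_div_mul_cancel he.ne', Real.rpow_one] at this

noncomputable def Ffun (γ₁ γ₂ γ₃ D₁ D₂ D₃ t : ℝ) : ℝ :=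
  (1 / 2) * t ^ 2 - D₁ * t ^ γ₁ - D₂ * t ^ γ₂ - D₃ * t ^ γ₃

noncomputable def psif (γ₁ γ₂ γ₃ D₁ D₂ D₃ t : ℝ) : ℝ :=
  1 - γ₁ * D₁ * t ^ (γ₁ - 2) - γ₂ * D₂ * t ^ (γ₂ - 2) - γ₃ * D₃ * t ^ (γ₃ - 2)

section core
variable {γ₁ γ₂ γ₃ D₁ D₂ D₃ : ℝ}

lemma hasDerivAt_Ffun (h1 : 0 < γ₁) {t : ℝ} (ht : 0 < t) :
    HasDerivAt (Ffun γ₁ γ₂ γ₃ D₁ D₂ D₃) (t * psif γ₁ γ₂ γ₃ D₁ D₂ D₃ t) t := by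
  have e : ∀ γ : ℝ, t ^ (γ - 1) = t * t ^ (γ - 2) := by
    intro γ
    rw [show γ - 1 = 1 + (γ - 2) by ring, Real.rpow_add ht, Real.rpow_one]
  have h0 : HasDerivAt (fun x : ℝ => (1/2 : ℝ) * x ^ 2) t t := by
    have := (hasDerivAt_pow 2 t).const_mul (1/2 : ℝ)
    simpa using this.congr_deriv (by push_cast; ring)
  have hd : ∀ γ D : ℝ, HasDerivAt (fun x : ℝ => D * x ^ γ) (D * (γ * t ^ (γ - 1))) t :=
    fun γ D => (Real.hasDerivAt_rpow_const (Or.inl ht.ne')).const_mul D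
  have := ((h0.sub (hd γ₁ D₁)).sub (hd γ₂ D₂)).sub (hd γ₃ D₃)
  refine this.congr_deriv ?_
  unfold psif
  rw [e γ₁, e γ₂, e γ₃]; ring

lemma deriv_Ffun (h1 : 0 < γ₁) {t : ℝ} (ht : 0 < t) :
    deriv (Ffun γ₁ γ₂ γ₃ D₁ D₂ D₃) t = t * psif γ₁ γ₂ γ₃ D₁ D₂ D₃ t :=
  (hasDerivAt_Ffun h1 ht).deriv

end core

noncomputable def gfun (γ₁ γ₂ γ₃ D₁ D₂ D₃ t : ℝ) : ℝ :=
  γ₁ * D₁ * (2 - γ₁) - γ₂ * D₂ * (γ₂ - 2) * t ^ (γ₂ - γ₁) - γ₃ * D₃ * (γ₃ - 2) * t ^ (γ₃ - γ₁)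

section core2
variable {γ₁ γ₂ γ₃ D₁ D₂ D₃ : ℝ}

lemma hasDerivAt_psif {t : ℝ} (ht : 0 < t) :
    HasDerivAt (psif γ₁ γ₂ γ₃ D₁ D₂ D₃)
      (t ^ (γ₁ - 3) * gfun γ₁ γ₂ γ₃ D₁ D₂ D₃ t) t := by
  have e : ∀ γ : ℝ, t ^ (γ - 3) = t ^ (γ₁ - 3) * t ^ (γ - γ₁) := by
    intro γ
    rw [← Real.rpow_add ht]; ring_nf
  have hd : ∀ γ D : ℝ, HasDerivAt (fun x : ℝ => γ * D * x ^ (γ - 2))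
      (γ * D * ((γ - 2) * t ^ (γ - 3))) t := by
    intro γ D
    have := (Real.hasDerivAt_rpow_const (p := γ - 2) (Or.inl ht.ne')).const_mul (γ * D)
    simpa [show γ - 2 - 1 = γ - 3 by ring] using this
  have := (((hasDerivAt_const t (1:ℝ)).sub (hd γ₁ D₁)).sub (hd γ₂ D₂)).sub (hd γ₃ D₃)
  refine this.congr_deriv ?_
  unfold gfun
  rw [e γ₁, e γ₂, e γ₃]
  have : t ^ (γ₁ - γ₁) = 1 := by rw [sub_self, Real.rpow_zero]
  rw [this]; ring

lemma deriv_psif {t : ℝ} (ht : 0 < t) :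
    deriv (psif γ₁ γ₂ γ₃ D₁ D₂ D₃) t
      = t ^ (γ₁ - 3) * gfun γ₁ γ₂ γ₃ D₁ D₂ D₃ t :=
  (hasDerivAt_psif ht).deriv

lemma gfun_anti (h12 : γ₁ < 2) (h3 : 2 < γ₂) (h4 : 2 < γ₃) (h13 : γ₁ < γ₂) (h14 : γ₁ < γ₃)
    (hD2 : 0 < D₂) (hD3 : 0 < D₃) :
    ∀ x y : ℝ, 0 ≤ x → x < y → gfun γ₁ γ₂ γ₃ D₁ D₂ D₃ y < gfun γ₁ γ₂ γ₃ D₁ D₂ D₃ x := by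
  intro x y hx hxy
  unfold gfun
  have h2 : x ^ (γ₂ - γ₁) < y ^ (γ₂ - γ₁) := Real.rpow_lt_rpow hx hxy (by linarith)
  have h3' : x ^ (γ₃ - γ₁) < y ^ (γ₃ - γ₁) := Real.rpow_lt_rpow hx hxy (by linarith)
  have c2 : 0 < γ₂ * D₂ * (γ₂ - 2) := mul_pos (mul_pos (lt_trans two_pos h3) hD2) (by linarith)
  have c3 : 0 < γ₃ * D₃ * (γ₃ - 2) := mul_pos (mul_pos (lt_trans two_pos h4) hD3) (by linarith)
  nlinarith

end core2

section core3
variable {γ₁ γ₂ γ₃ D₁ D₂ D₃ : ℝ}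

lemma sq_rpow_decomp {t : ℝ} (ht : 0 < t) (γ : ℝ) : t ^ γ = t ^ 2 * t ^ (γ - 2) := by
  have h : t ^ γ = t ^ ((2:ℝ) + (γ - 2)) := by norm_num
  rw [h, Real.rpow_add ht, show (2:ℝ) = ((2:ℕ):ℝ) by norm_num, Real.rpow_natCast]

lemma cont_Ffun (h1 : 0 ≤ γ₁) (h2 : 0 ≤ γ₂) (h3 : 0 ≤ γ₃) :
    Continuous (Ffun γ₁ γ₂ γ₃ D₁ D₂ D₃) := by
  rw [continuous_iff_continuousAt]
  intro x
  have c : ∀ γ : ℝ, 0 ≤ γ → ContinuousAt (fun t : ℝ => t ^ γ) x := fun γ hγ =>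
    Real.continuousAt_rpow_const x γ (Or.inr hγ)
  exact ((((continuous_pow 2).continuousAt.const_mul _).sub
    ((c γ₁ h1).const_mul _)).sub ((c γ₂ h2).const_mul _)).sub ((c γ₃ h3).const_mul _)

lemma contAt_psif {x : ℝ} (hx : x ≠ 0) :
    ContinuousAt (psif γ₁ γ₂ γ₃ D₁ D₂ D₃) x := by
  have c : ∀ γ : ℝ, ContinuousAt (fun t : ℝ => t ^ γ) x := fun γ =>
    Real.continuousAt_rpow_const x γ (Or.inl hx)
  exact (((continuousAt_const.sub ((c _).const_mul _)).sub
    ((c _).const_mul _)).sub ((c _).const_mul _))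

lemma cont_gfun (h1 : 0 ≤ γ₂ - γ₁) (h2 : 0 ≤ γ₃ - γ₁) :
    Continuous (gfun γ₁ γ₂ γ₃ D₁ D₂ D₃) := by
  rw [continuous_iff_continuousAt]
  intro x
  have c : ∀ γ : ℝ, 0 ≤ γ → ContinuousAt (fun t : ℝ => t ^ γ) x := fun γ hγ =>
    Real.continuousAt_rpow_const x γ (Or.inr hγ)
  exact ((continuousAt_const.sub ((c _ h1).const_mul _)).sub ((c _ h2).const_mul _))

end core3

section core4
variable {γ₁ γ₂ γ₃ D₁ D₂ D₃ : ℝ}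

set_option maxHeartbeats 1000000 in
lemma core (h1 : 0 < γ₁) (h2 : γ₁ < 2) (h3 : 2 < γ₂) (h4 : 2 < γ₃)
    (hD1 : 0 < D₁) (hD2 : 0 < D₂) (hD3 : 0 < D₃) {tstar : ℝ} (hts : 0 < tstar)
    (hA : D₁ * tstar ^ (γ₁ - 2) < 1 / 4)
    (hB : γ₂ * D₂ * tstar ^ (γ₂ - 2) + γ₃ * D₃ * tstar ^ (γ₃ - 2) < 1 / 4) :
    (∃ s τ : ℝ, 0 < s ∧ s < τ ∧
      (∀ t : ℝ, 0 < t → (deriv (Ffun γ₁ γ₂ γ₃ D₁ D₂ D₃) t = 0 ↔ t = s ∨ t = τ)) ∧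
      IsLocalMin (Ffun γ₁ γ₂ γ₃ D₁ D₂ D₃) s ∧
      Ffun γ₁ γ₂ γ₃ D₁ D₂ D₃ s < 0 ∧
      (∀ t : ℝ, 0 < t → Ffun γ₁ γ₂ γ₃ D₁ D₂ D₃ t ≤ Ffun γ₁ γ₂ γ₃ D₁ D₂ D₃ τ) ∧
      0 < Ffun γ₁ γ₂ γ₃ D₁ D₂ D₃ τ) ∧
    (∃! P : ℝ × ℝ, 0 < P.1 ∧ P.1 < P.2 ∧
      Ffun γ₁ γ₂ γ₃ D₁ D₂ D₃ P.1 = 0 ∧ Ffun γ₁ γ₂ γ₃ D₁ D₂ D₃ P.2 = 0 ∧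
      (∀ t : ℝ, 0 < t → (0 < Ffun γ₁ γ₂ γ₃ D₁ D₂ D₃ t ↔ P.1 < t ∧ t < P.2))) := by
  have h13 : γ₁ < γ₂ := by linarith
  have h14 : γ₁ < γ₃ := by linarith
  have hγ₂pos : (0:ℝ) < γ₂ := by linarith
  have hγ₃pos : (0:ℝ) < γ₃ := by linarith
  have hX1 : (0:ℝ) < tstar ^ (γ₁ - 2) := Real.rpow_pos_of_pos hts _
  have hX2 : (0:ℝ) < tstar ^ (γ₂ - 2) := Real.rpow_pos_of_pos hts _
  have hX3 : (0:ℝ) < tstar ^ (γ₃ - 2) := Real.rpow_pos_of_pos hts _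
  -- ψ(t*) > 0
  have hpsistar : 0 < psif γ₁ γ₂ γ₃ D₁ D₂ D₃ tstar := by
    unfold psif
    nlinarith [mul_pos hD1 hX1]
  -- F(t*) > 0
  have hFstar : 0 < Ffun γ₁ γ₂ γ₃ D₁ D₂ D₃ tstar := by
    unfold Ffun
    rw [sq_rpow_decomp hts γ₁, sq_rpow_decomp hts γ₂, sq_rpow_decomp hts γ₃]
    have ht2 : (0:ℝ) < tstar ^ 2 := by positivity
    have b2 : D₂ * tstar ^ (γ₂-2) ≤ γ₂ * D₂ * tstar ^ (γ₂-2) := by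
      nlinarith [mul_pos hD2 hX2]
    have b3 : D₃ * tstar ^ (γ₃-2) ≤ γ₃ * D₃ * tstar ^ (γ₃-2) := by
      nlinarith [mul_pos hD3 hX3]
    have hsum : D₁ * tstar ^ (γ₁-2) + D₂ * tstar ^ (γ₂-2) + D₃ * tstar ^ (γ₃-2) < 1/2 := by
      linarith
    have := mul_lt_mul_of_pos_left hsum ht2
    nlinarith [this]
  -- g : find u with g u > 0, v with g v < 0, then root t₀
  set c2 := γ₂ * D₂ * (γ₂ - 2) with hc2def
  set c3 := γ₃ * D₃ * (γ₃ - 2) with hc3def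
  set P := γ₁ * D₁ * (2 - γ₁) with hPdef
  have hc2 : 0 < c2 := mul_pos (mul_pos hγ₂pos hD2) (by linarith)
  have hc3 : 0 < c3 := mul_pos (mul_pos hγ₃pos hD3) (by linarith)
  have hP : 0 < P := mul_pos (mul_pos h1 hD1) (by linarith)
  set u := min ((P / (2*c2)) ^ (1/(γ₂-γ₁))) ((P / (2*c3)) ^ (1/(γ₃-γ₁))) / 2 with hudef
  have hu : 0 < u := by
    apply div_pos _ two_pos
    exact lt_min (Real.rpow_pos_of_pos (by positivity) _) (Real.rpow_pos_of_pos (by positivity) _)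
  have hgu : 0 < gfun γ₁ γ₂ γ₃ D₁ D₂ D₃ u := by
    have e2 : u ^ (γ₂-γ₁) < P / (2*c2) := by
      apply rpow_lt_of_lt_rpow_inv (by positivity) (by linarith) hu.le
      calc u < min ((P / (2*c2)) ^ (1/(γ₂-γ₁))) ((P / (2*c3)) ^ (1/(γ₃-γ₁))) := by
              rw [hudef]; exact half_lt_self (by positivity)
        _ ≤ _ := min_le_left _ _
    have e3 : u ^ (γ₃-γ₁) < P / (2*c3) := by
      apply rpow_lt_of_lt_rpow_inv (by positivity) (by linarith) hu.le
      calc u < min ((P / (2*c2)) ^ (1/(γ₂-γ₁))) ((P / (2*c3)) ^ (1/(γ₃-γ₁))) := by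
              rw [hudef]; exact half_lt_self (by positivity)
        _ ≤ _ := min_le_right _ _
    have e2' : c2 * u ^ (γ₂-γ₁) < P/2 := by
      rw [div_mul_eq_div_div] at e2
      calc c2 * u ^ (γ₂-γ₁) < c2 * (P/2/c2) := by
            exact mul_lt_mul_of_pos_left e2 hc2
        _ = P/2 := by field_simp
    have e3' : c3 * u ^ (γ₃-γ₁) < P/2 := by
      rw [div_mul_eq_div_div] at e3
      calc c3 * u ^ (γ₃-γ₁) < c3 * (P/2/c3) := mul_lt_mul_of_pos_left e3 hc3
        _ = P/2 := by field_simp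
    show (0:ℝ) < P - c2 * u ^ (γ₂-γ₁) - c3 * u ^ (γ₃-γ₁)
    linarith
  set v := max u ((P / c3) ^ (1/(γ₃-γ₁))) + 1 with hvdef
  have huv : u < v := by
    have := le_max_left u ((P / c3) ^ (1/(γ₃-γ₁)))
    rw [hvdef]; linarith
  have hvpos : 0 < v := hu.trans huv
  have hgv : gfun γ₁ γ₂ γ₃ D₁ D₂ D₃ v < 0 := by
    have e3 : P / c3 < v ^ (γ₃-γ₁) := by
      apply lt_rpow_of_rpow_inv_lt (by positivity) (by linarith)
      have := le_max_right u ((P / c3) ^ (1/(γ₃-γ₁)))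
      rw [hvdef]; linarith
    have e3' : P < c3 * v ^ (γ₃-γ₁) := by
      rw [div_lt_iff₀ hc3] at e3; linarith [e3]
    have e2 : 0 ≤ c2 * v ^ (γ₂-γ₁) := by positivity
    show P - c2 * v ^ (γ₂-γ₁) - c3 * v ^ (γ₃-γ₁) < 0
    linarith
  obtain ⟨t₀, ht₀mem, hgt₀⟩ : ∃ t₀ ∈ Ioo u v, gfun γ₁ γ₂ γ₃ D₁ D₂ D₃ t₀ = 0 := by
    have := intermediate_value_Ioo' huv.le
      ((cont_gfun (γ₁ := γ₁) (γ₂ := γ₂) (γ₃ := γ₃) (D₁ := D₁) (D₂ := D₂) (D₃ := D₃)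
        (by linarith) (by linarith)).continuousOn)
    have h0 : (0:ℝ) ∈ Ioo (gfun γ₁ γ₂ γ₃ D₁ D₂ D₃ v) (gfun γ₁ γ₂ γ₃ D₁ D₂ D₃ u) := ⟨hgv, hgu⟩
    obtain ⟨t₀, ht₀, he⟩ := this h0
    exact ⟨t₀, ht₀, he⟩
  have ht0pos : 0 < t₀ := hu.trans ht₀mem.1
  -- ψ monotone on (0, t₀], antitone on [t₀, ∞)
  have contpsi : ∀ {A : Set ℝ}, A ⊆ Ioi 0 → ContinuousOn (psif γ₁ γ₂ γ₃ D₁ D₂ D₃) A :=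
    fun hA' x hx => (contAt_psif (ne_of_gt (hA' hx))).continuousWithinAt
  have monopsi : StrictMonoOn (psif γ₁ γ₂ γ₃ D₁ D₂ D₃) (Ioc 0 t₀) := by
    apply strictMonoOn_of_deriv_pos (convex_Ioc _ _) (contpsi Ioc_subset_Ioi_self)
    intro x hx
    rw [interior_Ioc] at hx
    rw [deriv_psif hx.1]
    have hgx : 0 < gfun γ₁ γ₂ γ₃ D₁ D₂ D₃ x := by
      have := gfun_anti (D₁ := D₁) h2 h3 h4 h13 h14 hD2 hD3 x t₀ hx.1.le hx.2
      rw [hgt₀] at this; exact this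
    exact mul_pos (Real.rpow_pos_of_pos hx.1 _) hgx
  have antipsi : StrictAntiOn (psif γ₁ γ₂ γ₃ D₁ D₂ D₃) (Ici t₀) := by
    apply strictAntiOn_of_deriv_neg (convex_Ici _)
      (contpsi (fun x hx => lt_of_lt_of_le ht0pos hx))
    intro x hx
    rw [interior_Ici] at hx
    rw [deriv_psif (ht0pos.trans hx)]
    have hgx : gfun γ₁ γ₂ γ₃ D₁ D₂ D₃ x < 0 := by
      have := gfun_anti (D₁ := D₁) h2 h3 h4 h13 h14 hD2 hD3 t₀ x ht0pos.le hx
      rw [hgt₀] at this; exact this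
    exact mul_neg_of_pos_of_neg (Real.rpow_pos_of_pos (ht0pos.trans hx) _) hgx
  -- ψ t₀ > 0
  have hpsit₀ : 0 < psif γ₁ γ₂ γ₃ D₁ D₂ D₃ t₀ := by
    rcases le_total tstar t₀ with h | h
    · exact lt_of_lt_of_le hpsistar
        (monopsi.monotoneOn ⟨hts, h⟩ ⟨ht0pos, le_refl _⟩ h)
    · exact lt_of_lt_of_le hpsistar
        (antipsi.antitoneOn (mem_Ici.mpr (le_refl _)) (mem_Ici.mpr h) h)
  -- small point p₁ with ψ p₁ < 0
  set p₁ := min ((γ₁*D₁) ^ (1/(2-γ₁))) t₀ / 2 with hp₁def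
  have hp₁pos : 0 < p₁ :=
    div_pos (lt_min (Real.rpow_pos_of_pos (by positivity) _) ht0pos) two_pos
  have hp₁t₀ : p₁ < t₀ := by
    have h' : min ((γ₁*D₁) ^ (1/(2-γ₁))) t₀ ≤ t₀ := min_le_right _ _
    have : 0 < min ((γ₁*D₁) ^ (1/(2-γ₁))) t₀ := lt_min (Real.rpow_pos_of_pos (by positivity) _) ht0pos
    rw [hp₁def]; linarith
  have hpsip₁ : psif γ₁ γ₂ γ₃ D₁ D₂ D₃ p₁ < 0 := by
    have hlt : p₁ < (γ₁*D₁) ^ (1/(2-γ₁)) := by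
      have h' : min ((γ₁*D₁) ^ (1/(2-γ₁))) t₀ ≤ (γ₁*D₁) ^ (1/(2-γ₁)) := min_le_left _ _
      have : 0 < min ((γ₁*D₁) ^ (1/(2-γ₁))) t₀ := lt_min (Real.rpow_pos_of_pos (by positivity) _) ht0pos
      rw [hp₁def]; linarith
    have e1 : p₁ ^ (2-γ₁) < γ₁*D₁ :=
      rpow_lt_of_lt_rpow_inv (by positivity) (by linarith) hp₁pos.le hlt
    have e2 : p₁ ^ (γ₁-2) = (p₁ ^ (2-γ₁))⁻¹ := by
      rw [show γ₁ - 2 = -(2-γ₁) by ring, Real.rpow_neg hp₁pos.le]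
    have e3 : 1 < γ₁ * D₁ * p₁ ^ (γ₁-2) := by
      rw [e2, ← div_eq_mul_inv]
      exact (one_lt_div (Real.rpow_pos_of_pos hp₁pos _)).mpr e1
    have n2 : 0 < γ₂ * D₂ * p₁ ^ (γ₂-2) :=
      mul_pos (mul_pos hγ₂pos hD2) (Real.rpow_pos_of_pos hp₁pos _)
    have n3 : 0 < γ₃ * D₃ * p₁ ^ (γ₃-2) :=
      mul_pos (mul_pos hγ₃pos hD3) (Real.rpow_pos_of_pos hp₁pos _)
    show 1 - γ₁ * D₁ * p₁ ^ (γ₁-2) - γ₂ * D₂ * p₁ ^ (γ₂-2) - γ₃ * D₃ * p₁ ^ (γ₃-2) < 0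
    linarith
  -- the smaller critical point s
  obtain ⟨s, hsmem, hpsis⟩ : ∃ s ∈ Ioo p₁ t₀, psif γ₁ γ₂ γ₃ D₁ D₂ D₃ s = 0 := by
    have := intermediate_value_Ioo hp₁t₀.le
      (contpsi (fun x hx => lt_of_lt_of_le hp₁pos hx.1))
    obtain ⟨s, hs, he⟩ := this ⟨hpsip₁, hpsit₀⟩
    exact ⟨s, hs, he⟩
  have hspos : 0 < s := hp₁pos.trans hsmem.1
  have hst₀ : s < t₀ := hsmem.2
  -- large point p₂ with ψ p₂ < 0
  set p₂ := max t₀ (((γ₃*D₃)⁻¹) ^ (1/(γ₃-2))) + 1 with hp₂def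
  have ht₀p₂ : t₀ < p₂ := by
    have := le_max_left t₀ (((γ₃*D₃)⁻¹) ^ (1/(γ₃-2)))
    rw [hp₂def]; linarith
  have hp₂pos : 0 < p₂ := ht0pos.trans ht₀p₂
  have hpsip₂ : psif γ₁ γ₂ γ₃ D₁ D₂ D₃ p₂ < 0 := by
    have hlt : ((γ₃*D₃)⁻¹) ^ (1/(γ₃-2)) < p₂ := by
      have := le_max_right t₀ (((γ₃*D₃)⁻¹) ^ (1/(γ₃-2)))
      rw [hp₂def]; linarith
    have e1 : (γ₃*D₃)⁻¹ < p₂ ^ (γ₃-2) :=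
      lt_rpow_of_rpow_inv_lt (show (0:ℝ) < (γ₃*D₃)⁻¹ by positivity)
        (show (0:ℝ) < γ₃-2 by linarith) hlt
    have e3 : 1 < γ₃ * D₃ * p₂ ^ (γ₃-2) := by
      have h' : 0 < γ₃ * D₃ := by positivity
      calc (1:ℝ) = (γ₃*D₃) * (γ₃*D₃)⁻¹ := by field_simp
        _ < (γ₃*D₃) * p₂ ^ (γ₃-2) := mul_lt_mul_of_pos_left e1 h'
        _ = γ₃ * D₃ * p₂ ^ (γ₃-2) := by ring
    have n1 : 0 < γ₁ * D₁ * p₂ ^ (γ₁-2) :=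
      mul_pos (mul_pos h1 hD1) (Real.rpow_pos_of_pos hp₂pos _)
    have n2 : 0 < γ₂ * D₂ * p₂ ^ (γ₂-2) :=
      mul_pos (mul_pos hγ₂pos hD2) (Real.rpow_pos_of_pos hp₂pos _)
    show 1 - γ₁ * D₁ * p₂ ^ (γ₁-2) - γ₂ * D₂ * p₂ ^ (γ₂-2) - γ₃ * D₃ * p₂ ^ (γ₃-2) < 0
    linarith
  -- the larger critical point τ
  obtain ⟨τ, hτmem, hpsiτ⟩ : ∃ τ ∈ Ioo t₀ p₂, psif γ₁ γ₂ γ₃ D₁ D₂ D₃ τ = 0 := by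
    have := intermediate_value_Ioo' ht₀p₂.le
      (contpsi (fun x hx => lt_of_lt_of_le ht0pos hx.1))
    obtain ⟨τ, hτ, he⟩ := this ⟨hpsip₂, hpsit₀⟩
    exact ⟨τ, hτ, he⟩
  have ht₀τ : t₀ < τ := hτmem.1
  have hsτ : s < τ := hst₀.trans ht₀τ
  have hτpos : 0 < τ := hspos.trans hsτ
  -- sign of ψ
  have signL : ∀ t : ℝ, 0 < t → t < s → psif γ₁ γ₂ γ₃ D₁ D₂ D₃ t < 0 := by
    intro t ht hts'
    have := monopsi ⟨ht, by linarith⟩ ⟨hspos, hst₀.le⟩ hts'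
    rwa [hpsis] at this
  have signM : ∀ t : ℝ, s < t → t < τ → 0 < psif γ₁ γ₂ γ₃ D₁ D₂ D₃ t := by
    intro t hst htτ
    rcases le_total t t₀ with h | h
    · have := monopsi ⟨hspos, hst₀.le⟩ ⟨hspos.trans hst, h⟩ hst
      rwa [hpsis] at this
    · have := antipsi (mem_Ici.mpr h) (mem_Ici.mpr ht₀τ.le) htτ
      rwa [hpsiτ] at this
  have signR : ∀ t : ℝ, τ < t → psif γ₁ γ₂ γ₃ D₁ D₂ D₃ t < 0 := by
    intro t hτt
    have := antipsi (mem_Ici.mpr ht₀τ.le) (mem_Ici.mpr (by linarith)) hτt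
    rwa [hpsiτ] at this
  -- F monotonicity
  have contF : ∀ {A : Set ℝ}, ContinuousOn (Ffun γ₁ γ₂ γ₃ D₁ D₂ D₃) A :=
    fun {A} => (cont_Ffun h1.le (by linarith) (by linarith)).continuousOn
  have antiF1 : StrictAntiOn (Ffun γ₁ γ₂ γ₃ D₁ D₂ D₃) (Icc 0 s) := by
    apply strictAntiOn_of_deriv_neg (convex_Icc _ _) contF
    intro x hx
    rw [interior_Icc] at hx
    rw [deriv_Ffun h1 hx.1]
    exact mul_neg_of_pos_of_neg hx.1 (signL x hx.1 hx.2)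
  have monoF2 : StrictMonoOn (Ffun γ₁ γ₂ γ₃ D₁ D₂ D₃) (Icc s τ) := by
    apply strictMonoOn_of_deriv_pos (convex_Icc _ _) contF
    intro x hx
    rw [interior_Icc] at hx
    rw [deriv_Ffun h1 (hspos.trans hx.1)]
    exact mul_pos (hspos.trans hx.1) (signM x hx.1 hx.2)
  have antiF3 : StrictAntiOn (Ffun γ₁ γ₂ γ₃ D₁ D₂ D₃) (Ici τ) := by
    apply strictAntiOn_of_deriv_neg (convex_Ici _) contF
    intro x hx
    rw [interior_Ici] at hx
    rw [deriv_Ffun h1 (hτpos.trans hx)]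
    exact mul_neg_of_pos_of_neg (hτpos.trans hx) (signR x hx)
  have hF0 : Ffun γ₁ γ₂ γ₃ D₁ D₂ D₃ 0 = 0 := by
    unfold Ffun
    rw [Real.zero_rpow h1.ne', Real.zero_rpow (show γ₂ ≠ 0 by linarith),
      Real.zero_rpow (show γ₃ ≠ 0 by linarith)]
    norm_num
  -- F s < 0
  have hFs : Ffun γ₁ γ₂ γ₃ D₁ D₂ D₃ s < 0 := by
    have := antiF1 (left_mem_Icc.mpr hspos.le) (right_mem_Icc.mpr hspos.le) hspos
    rwa [hF0] at this
  -- position of tstar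
  have hstar1 : s < tstar := by
    rcases lt_trichotomy tstar s with h | h | h
    · exact absurd (signL tstar hts h) (by linarith)
    · rw [h] at hpsistar; rw [hpsis] at hpsistar; linarith
    · exact h
  have hstar2 : tstar < τ := by
    rcases lt_trichotomy tstar τ with h | h | h
    · exact h
    · rw [h] at hpsistar; rw [hpsiτ] at hpsistar; linarith
    · exact absurd (signR tstar h) (by linarith)
  -- F τ > 0
  have hFτ : 0 < Ffun γ₁ γ₂ γ₃ D₁ D₂ D₃ τ :=
    lt_of_lt_of_le hFstar (monoF2.monotoneOn ⟨hstar1.le, hstar2.le⟩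
      (right_mem_Icc.mpr hsτ.le) hstar2.le)
  -- global max
  have hmax : ∀ t : ℝ, 0 < t →
      Ffun γ₁ γ₂ γ₃ D₁ D₂ D₃ t ≤ Ffun γ₁ γ₂ γ₃ D₁ D₂ D₃ τ := by
    intro t ht
    rcases le_total t s with h | h
    · have := antiF1 (left_mem_Icc.mpr hspos.le) ⟨ht.le, h⟩ ht
      rw [hF0] at this
      linarith
    · rcases le_total t τ with h' | h'
      · exact monoF2.monotoneOn ⟨h, h'⟩ (right_mem_Icc.mpr hsτ.le) h'
      · exact antiF3.antitoneOn (mem_Ici.mpr le_rfl) (mem_Ici.mpr h') h'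
  -- local min at s
  have hlocmin : IsLocalMin (Ffun γ₁ γ₂ γ₃ D₁ D₂ D₃) s := by
    have hmem : Ioo (0:ℝ) τ ∈ nhds s := isOpen_Ioo.mem_nhds ⟨hspos, hsτ⟩
    filter_upwards [hmem] with t ht
    rcases le_total t s with h | h
    · exact antiF1.antitoneOn ⟨ht.1.le, h⟩ (right_mem_Icc.mpr hspos.le) h
    · exact monoF2.monotoneOn (left_mem_Icc.mpr hsτ.le) ⟨h, ht.2.le⟩ h
  -- critical points characterization
  have hcrit : ∀ t : ℝ, 0 < t →
      (deriv (Ffun γ₁ γ₂ γ₃ D₁ D₂ D₃) t = 0 ↔ t = s ∨ t = τ) := by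
    intro t ht
    rw [deriv_Ffun h1 ht, mul_eq_zero]
    constructor
    · rintro (h | h)
      · exact absurd h ht.ne'
      · rcases lt_trichotomy t s with h' | h' | h'
        · exact absurd (signL t ht h') (by rw [h]; simp)
        · exact Or.inl h'
        · rcases lt_trichotomy t τ with h'' | h'' | h''
          · exact absurd (signM t h' h'') (by rw [h]; simp)
          · exact Or.inr h''
          · exact absurd (signR t h'') (by rw [h]; simp)
    · rintro (rfl | rfl)
      · exact Or.inr hpsis
      · exact Or.inr hpsiτ
  -- zeros R₀, R₁
  obtain ⟨R₀, hR₀mem, hFR₀⟩ : ∃ R₀ ∈ Ioo s τ, Ffun γ₁ γ₂ γ₃ D₁ D₂ D₃ R₀ = 0 := by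
    obtain ⟨R₀, hR₀, he⟩ := intermediate_value_Ioo hsτ.le contF ⟨hFs, hFτ⟩
    exact ⟨R₀, hR₀, he⟩
  set X := max τ (((2*D₃)⁻¹) ^ (1/(γ₃-2))) + 1 with hXdef
  have hτX : τ < X := by
    have := le_max_left τ (((2*D₃)⁻¹) ^ (1/(γ₃-2)))
    rw [hXdef]; linarith
  have hXpos : 0 < X := hτpos.trans hτX
  have hFX : Ffun γ₁ γ₂ γ₃ D₁ D₂ D₃ X < 0 := by
    have hlt : ((2*D₃)⁻¹) ^ (1/(γ₃-2)) < X := by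
      have := le_max_right τ (((2*D₃)⁻¹) ^ (1/(γ₃-2)))
      rw [hXdef]; linarith
    have e1 : (2*D₃)⁻¹ < X ^ (γ₃-2) :=
      lt_rpow_of_rpow_inv_lt (show (0:ℝ) < (2*D₃)⁻¹ by positivity)
        (show (0:ℝ) < γ₃-2 by linarith) hlt
    have e2 : 1/2 < D₃ * X ^ (γ₃-2) := by
      have h' : 0 < 2*D₃ := by positivity
      have := mul_lt_mul_of_pos_left e1 h'
      rw [mul_inv_cancel₀ h'.ne'] at this
      linarith
    have n1 : 0 < D₁ * X ^ γ₁ := mul_pos hD1 (Real.rpow_pos_of_pos hXpos _)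
    have n2 : 0 < D₂ * X ^ γ₂ := mul_pos hD2 (Real.rpow_pos_of_pos hXpos _)
    have hX2 : (0:ℝ) < X ^ 2 := by positivity
    have e3 : X^2 * (1/2) < X^2 * (D₃ * X ^ (γ₃-2)) := mul_lt_mul_of_pos_left e2 hX2
    unfold Ffun
    rw [sq_rpow_decomp hXpos γ₃]
    linarith
  obtain ⟨R₁, hR₁mem, hFR₁⟩ : ∃ R₁ ∈ Ioo τ X, Ffun γ₁ γ₂ γ₃ D₁ D₂ D₃ R₁ = 0 := by
    obtain ⟨R₁, hR₁, he⟩ := intermediate_value_Ioo' hτX.le contF ⟨hFX, hFτ⟩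
    exact ⟨R₁, hR₁, he⟩
  have hsR₀ : s < R₀ := hR₀mem.1
  have hR₀τ : R₀ < τ := hR₀mem.2
  have hτR₁ : τ < R₁ := hR₁mem.1
  have hR₀pos : 0 < R₀ := hspos.trans hsR₀
  have hR₀R₁ : R₀ < R₁ := hR₀τ.trans hτR₁
  -- positivity characterization
  have hchar : ∀ t : ℝ, 0 < t →
      (0 < Ffun γ₁ γ₂ γ₃ D₁ D₂ D₃ t ↔ R₀ < t ∧ t < R₁) := by
    intro t ht
    constructor
    · intro hFt
      constructor
      · by_contra hcon
        push_neg at hcon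
        rcases le_total t s with h | h
        · have := antiF1 (left_mem_Icc.mpr hspos.le) ⟨ht.le, h⟩ ht
          rw [hF0] at this; linarith
        · have := monoF2.monotoneOn ⟨h, by linarith⟩ ⟨hsR₀.le, hR₀τ.le⟩ hcon
          rw [hFR₀] at this; linarith
      · by_contra hcon
        push_neg at hcon
        have := antiF3.antitoneOn (mem_Ici.mpr hτR₁.le) (mem_Ici.mpr (by linarith)) hcon
        rw [hFR₁] at this; linarith
    · rintro ⟨h₁, h₂⟩
      rcases le_total t τ with h | h
      · have := monoF2 ⟨hsR₀.le, hR₀τ.le⟩ ⟨by linarith, h⟩ h₁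
        rwa [hFR₀] at this
      · have := antiF3 (mem_Ici.mpr h) (mem_Ici.mpr (by linarith)) h₂
        rwa [hFR₁] at this
  refine ⟨⟨s, τ, hspos, hsτ, hcrit, hlocmin, hFs, hmax, hFτ⟩, ?_⟩
  refine ⟨(R₀, R₁), ⟨hR₀pos, hR₀R₁, hFR₀, hFR₁, hchar⟩, ?_⟩
  rintro ⟨x, y⟩ ⟨hx, hxy, hFx, hFy, hchar'⟩
  have hset : Ioo x y = Ioo R₀ R₁ := by
    ext t
    constructor
    · intro ht
      have htpos : 0 < t := hx.trans ht.1
      exact (hchar t htpos).mp ((hchar' t htpos).mpr ht)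
    · intro ht
      have htpos : 0 < t := hR₀pos.trans ht.1
      exact (hchar' t htpos).mp ((hchar t htpos).mpr ht)
  have hx' : x = R₀ := by
    have := congrArg sInf hset
    rwa [csInf_Ioo hxy, csInf_Ioo hR₀R₁] at this
  have hy' : y = R₁ := by
    have := congrArg sSup hset
    rwa [csSup_Ioo hxy, csSup_Ioo hR₀R₁] at this
  simp [hx', hy']

end core4

lemma instantiate (γ₁ γ₂ γ₃ CP CQ SS : ℝ) (h1 : 0 < γ₁) (h2 : γ₁ < 2)
    (h3 : 2 < γ₂) (h4 : 2 < γ₃) (hCP : 0 < CP) (hCQ : 0 < CQ) (hSS : 0 < SS) :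
    ∃ α₁ : ℝ, 0 < α₁ ∧ ∀ A B ν : ℝ, 0 < A → 0 < B → 0 < ν →
      B * A ^ ((γ₂ - 2) / (2 - γ₁)) + ν * A ^ ((γ₃ - 2) / (2 - γ₁)) < α₁ →
      ∃ tstar : ℝ, 0 < tstar ∧ CP * A * tstar ^ (γ₁ - 2) < 1 / 4 ∧
        γ₂ * (CQ * B) * tstar ^ (γ₂ - 2) + γ₃ * (SS * ν) * tstar ^ (γ₃ - 2) < 1 / 4 := by
  have h2γ : (0:ℝ) < 2 - γ₁ := by linarith
  set c' := 4 * (γ₁ + 1) * CP with hc'def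
  have hc' : 0 < c' := by positivity
  set e₁ := (γ₂ - 2) / (2 - γ₁) with he₁def
  set e₂ := (γ₃ - 2) / (2 - γ₁) with he₂def
  set K₂ := γ₂ * CQ * c' ^ e₁ with hK₂def
  set K₃ := γ₃ * SS * c' ^ e₂ with hK₃def
  have hK₂ : 0 < K₂ := by
    refine mul_pos (mul_pos (by linarith) hCQ) (Real.rpow_pos_of_pos hc' _)
  have hK₃ : 0 < K₃ := by
    refine mul_pos (mul_pos (by linarith) hSS) (Real.rpow_pos_of_pos hc' _)
  set M := max K₂ K₃ + 1 with hMdef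
  have hM : 0 < M := by
    have := le_max_left K₂ K₃
    rw [hMdef]; linarith
  refine ⟨1 / (4 * M), by positivity, ?_⟩
  intro A B ν hA hB hν hT
  set tstar := (c' * A) ^ (1 / (2 - γ₁)) with htsdef
  have hcA : 0 < c' * A := mul_pos hc' hA
  have hts : 0 < tstar := Real.rpow_pos_of_pos hcA _
  have key : ∀ γ : ℝ, tstar ^ (γ - 2)
      = c' ^ ((γ - 2) / (2 - γ₁)) * A ^ ((γ - 2) / (2 - γ₁)) := by
    intro γ
    rw [htsdef, ← Real.rpow_mul hcA.le,
      show 1 / (2 - γ₁) * (γ - 2) = (γ - 2) / (2 - γ₁) by ring,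
      Real.mul_rpow hc'.le hA.le]
  refine ⟨tstar, hts, ?_, ?_⟩
  · rw [key γ₁, show (γ₁ - 2) / (2 - γ₁) = -1 by
      rw [div_eq_iff h2γ.ne']; ring]
    rw [Real.rpow_neg_one, Real.rpow_neg_one]
    have he : CP * A * (c'⁻¹ * A⁻¹) = 1 / (4 * (γ₁ + 1)) := by
      rw [hc'def]; field_simp
    rw [he]
    rw [div_lt_div_iff₀ (by linarith) (by norm_num)]
    linarith
  · rw [key γ₂, key γ₃, ← he₁def, ← he₂def]
    have e2 : γ₂ * (CQ * B) * (c' ^ e₁ * A ^ e₁) = K₂ * (B * A ^ e₁) := by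
      rw [hK₂def]; ring
    have e3 : γ₃ * (SS * ν) * (c' ^ e₂ * A ^ e₂) = K₃ * (ν * A ^ e₂) := by
      rw [hK₃def]; ring
    rw [e2, e3]
    have p1 : 0 < B * A ^ e₁ := mul_pos hB (Real.rpow_pos_of_pos hA _)
    have p2 : 0 < ν * A ^ e₂ := mul_pos hν (Real.rpow_pos_of_pos hA _)
    have b2 : K₂ ≤ M := by
      have := le_max_left K₂ K₃; rw [hMdef]; linarith
    have b3 : K₃ ≤ M := by
      have := le_max_right K₂ K₃; rw [hMdef]; linarith
    calc K₂ * (B * A ^ e₁) + K₃ * (ν * A ^ e₂)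
        ≤ M * (B * A ^ e₁) + M * (ν * A ^ e₂) := by
          gcongr
      _ = M * (B * A ^ e₁ + ν * A ^ e₂) := by ring
      _ < M * (1 / (4 * M)) := by exact mul_lt_mul_of_pos_left hT hM
      _ = 1 / 4 := by field_simp

theorem stmt_0 (N : ℕ) (hN : 3 ≤ N) (p q Cp Cq S : ℝ)
    (hp : 2 < p) (hpN : p < 2 + 4 / (N : ℝ)) (hNq : 2 + 4 / (N : ℝ) < q)
    (hq : q < twoStar N) (hCp : 0 < Cp) (hCq : 0 < Cq) (hS : 0 < S) :
    ∃ α₁ : ℝ, 0 < α₁ ∧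
      ∀ μ₁ μ₂ ν a b : ℝ, 0 < μ₁ → 0 < μ₂ → 0 < ν → 0 < a → 0 < b →
        Tab N p q μ₁ μ₂ ν a b < α₁ →
        -- exactly two critical points: a local minimum with negative value,
        -- and a global maximum over (0,∞) with positive value
        (∃ s τ : ℝ, 0 < s ∧ s < τ ∧
          (∀ t : ℝ, 0 < t →
            (deriv (hab N p q Cp Cq S μ₁ μ₂ ν a b) t = 0 ↔ t = s ∨ t = τ)) ∧
          IsLocalMin (hab N p q Cp Cq S μ₁ μ₂ ν a b) s ∧
          hab N p q Cp Cq S μ₁ μ₂ ν a b s < 0 ∧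
          (∀ t : ℝ, 0 < t →
            hab N p q Cp Cq S μ₁ μ₂ ν a b t ≤ hab N p q Cp Cq S μ₁ μ₂ ν a b τ) ∧
          0 < hab N p q Cp Cq S μ₁ μ₂ ν a b τ) ∧
        -- unique pair of zeros 0 < R₀ < R₁ with h > 0 exactly on (R₀, R₁)
        (∃! P : ℝ × ℝ, 0 < P.1 ∧ P.1 < P.2 ∧
          hab N p q Cp Cq S μ₁ μ₂ ν a b P.1 = 0 ∧
          hab N p q Cp Cq S μ₁ μ₂ ν a b P.2 = 0 ∧
          (∀ t : ℝ, 0 < t →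
            (0 < hab N p q Cp Cq S μ₁ μ₂ ν a b t ↔ P.1 < t ∧ t < P.2))) := by
  have hN3 : (3:ℝ) ≤ (N:ℝ) := by exact_mod_cast hN
  have hNpos : (0:ℝ) < (N:ℝ) := by linarith
  have hN2 : (0:ℝ) < (N:ℝ) - 2 := by linarith
  have hγ₁pos : 0 < gam N p := by
    unfold gam; exact div_pos (mul_pos hNpos (by linarith)) two_pos
  have hγ₁lt2 : gam N p < 2 := by
    have h1 : (N:ℝ) * (p - 2) < (N:ℝ) * (4 / (N:ℝ)) :=
      mul_lt_mul_of_pos_left (by linarith) hNpos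
    have h2 : (N:ℝ) * (4 / (N:ℝ)) = 4 := by field_simp
    unfold gam; rw [h2] at h1; linarith
  have hγ₂gt2 : 2 < gam N q := by
    have h1 : (N:ℝ) * (4 / (N:ℝ)) < (N:ℝ) * (q - 2) :=
      mul_lt_mul_of_pos_left (by linarith) hNpos
    have h2 : (N:ℝ) * (4 / (N:ℝ)) = 4 := by field_simp
    unfold gam; rw [h2] at h1; linarith
  have hγ₃gt2 : 2 < twoStar N := by
    unfold twoStar; rw [lt_div_iff₀ hN2]; linarith
  have hq2 : 2 < q := by
    have : (0:ℝ) < 4 / (N:ℝ) := by positivity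
    linarith
  obtain ⟨α₁, hα₁, Hinst⟩ := instantiate (gam N p) (gam N q) (twoStar N)
    (Cp / p) (Cq / q) (S ^ (-(twoStar N / 2)))
    hγ₁pos hγ₁lt2 hγ₂gt2 hγ₃gt2
    (div_pos hCp (by linarith)) (div_pos hCq (by linarith))
    (Real.rpow_pos_of_pos hS _)
  refine ⟨α₁, hα₁, ?_⟩
  intro μ₁ μ₂ ν a b hμ₁ hμ₂ hν ha hb hT
  have hApos : 0 < μ₁ * a ^ ((p - gam N p) / 2) :=
    mul_pos hμ₁ (Real.rpow_pos_of_pos ha _)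
  have hBpos : 0 < μ₂ * b ^ ((q - gam N q) / 2) :=
    mul_pos hμ₂ (Real.rpow_pos_of_pos hb _)
  have hT' : μ₂ * b ^ ((q - gam N q) / 2) *
        (μ₁ * a ^ ((p - gam N p) / 2)) ^ ((gam N q - 2) / (2 - gam N p))
      + ν * (μ₁ * a ^ ((p - gam N p) / 2)) ^ ((twoStar N - 2) / (2 - gam N p)) < α₁ := hT
  obtain ⟨tstar, hts, hbd1, hbd2⟩ :=
    Hinst (μ₁ * a ^ ((p - gam N p) / 2)) (μ₂ * b ^ ((q - gam N q) / 2)) ν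
      hApos hBpos hν hT'
  have hD1 : 0 < μ₁ / p * Cp * a ^ ((p - gam N p) / 2) :=
    mul_pos (mul_pos (div_pos hμ₁ (by linarith)) hCp) (Real.rpow_pos_of_pos ha _)
  have hD2 : 0 < μ₂ / q * Cq * b ^ ((q - gam N q) / 2) :=
    mul_pos (mul_pos (div_pos hμ₂ (by linarith)) hCq) (Real.rpow_pos_of_pos hb _)
  have hD3 : 0 < ν * S ^ (-(twoStar N / 2)) :=
    mul_pos hν (Real.rpow_pos_of_pos hS _)
  have hbd1' : (μ₁ / p * Cp * a ^ ((p - gam N p) / 2)) * tstar ^ (gam N p - 2) < 1 / 4 := by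
    have e : μ₁ / p * Cp * a ^ ((p - gam N p) / 2)
        = Cp / p * (μ₁ * a ^ ((p - gam N p) / 2)) := by ring
    rw [e]; exact hbd1
  have hbd2' : gam N q * (μ₂ / q * Cq * b ^ ((q - gam N q) / 2)) * tstar ^ (gam N q - 2)
      + twoStar N * (ν * S ^ (-(twoStar N / 2))) * tstar ^ (twoStar N - 2) < 1 / 4 := by
    have e1 : μ₂ / q * Cq * b ^ ((q - gam N q) / 2)
        = Cq / q * (μ₂ * b ^ ((q - gam N q) / 2)) := by ring
    have e2 : ν * S ^ (-(twoStar N / 2)) = S ^ (-(twoStar N / 2)) * ν := by ring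
    rw [e1, e2]; exact hbd2
  have hres := core hγ₁pos hγ₁lt2 hγ₂gt2 hγ₃gt2 hD1 hD2 hD3 hts hbd1' hbd2'
  exact hres
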